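/- Monotone decrease of constraint residual in Bregman iteration: let E be convex, and suppose w_{k+1} minimizes w ↦ D_E^{p_k}(w, w_k) + (λ/2)||Aw - b||² with p_k ∈ ∂E(w_k). Then ||Aw_{k+1} - b||₂² ≤ ||Aw_k - b||₂². -/
import Mathlib


open Finset

theorem bregman_residual_decrease (m n : ℕ) (E : (Fin n → ℝ) → ℝ)
    (hE : ConvexOn ℝ Set.univ E)
    (A : Matrix (Fin m) (Fin n) ℝ) (b : Fin m → ℝ) (lam : ℝ) (hlam : 0 < lam)
    (wk pk : Fin n → ℝ)
    (hpk : ∀ x : Fin n → ℝ, E x ≥ E wk + ∑ i, pk i * (x i - wk i))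
    (wk1 : Fin n → ℝ)
    (hmin : ∀ w : Fin n → ℝ,
      (E wk1 - E wk - ∑ i, pk i * (wk1 i - wk i)) +
        (lam / 2) * ∑ j, (A.mulVec wk1 j - b j) ^ 2 ≤
      (E w - E wk - ∑ i, pk i * (w i - wk i)) +
        (lam / 2) * ∑ j, (A.mulVec w j - b j) ^ 2) :
    ∑ j, (A.mulVec wk1 j - b j) ^ 2 ≤ ∑ j, (A.mulVec wk j - b j) ^ 2 := by
  have h := hmin wk
  simp at h
  have h2 := hpk wk1
  nlinarith [h, h2]
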